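/- Case k = 1 of the main conjecture: for any X ∈ P^m and e ≥ 1, writing (X_1, X_2) = Ψ_{(e,(m,m+e))} ∘ Ψ_{(e,(m,m))} (X, X), one has X_1 ⊆ X_2. Explicitly, Ψ_{(e,(m,m))}(X,X) = (X, (X+e) ∪ {0,...,e-1}), and applying Ψ_{(e,(m,m+e))} to this pair yields a pair (Y_1, Y_2) with Y_1 ⊆ Y_2. -/

import Mathlib

/-- pick the largest element of `Y` that is `≤ a`, or the largest element of `Y` if none. -/
def pickLE (a : ℕ) (Y : Finset ℕ) : ℕ :=
  if h : (Y.filter (fun b => b ≤ a)).Nonempty then (Y.filter (fun b => b ≤ a)).max' h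
  else if h2 : Y.Nonempty then Y.max' h2 else 0

/-- greedy matching: process the given list in order, each time picking via `pickLE`
from the remaining elements of `Y`. -/
def greedyList : List ℕ → Finset ℕ → List ℕ
  | [], _ => []
  | a :: as, Y => pickLE a Y :: greedyList as (Y.erase (pickLE a Y))

/-- the list of images of the greedy injection `φ : X1 → X2`, processing the elements
of `X1` in increasing order. -/
def phiList (X1 X2 : Finset ℕ) : List ℕ := greedyList (X1.sort (· ≤ ·)) X2

/-- the image `Y1 = φ(X1)` of the greedy injection. -/
def phiImage (X1 X2 : Finset ℕ) : Finset ℕ := (phiList X1 X2).toFinset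

/-- the map `Ψ_{(e,(m1,m2))}` on pairs of finite sets of nonnegative integers:
`Ψ(X1,X2) = (φ(X1), (X1+e) ∪ {b+e : b ∈ X2 \ φ(X1)} ∪ {0,…,e-1})`. -/
def Psi (e : ℕ) (X1 X2 : Finset ℕ) : Finset ℕ × Finset ℕ :=
  (phiImage X1 X2,
   (X1.image (fun x => x + e)) ∪ ((X2 \ phiImage X1 X2).image (fun x => x + e)) ∪
     Finset.range e)

lemma pickLE_mem {Y : Finset ℕ} (a : ℕ) (hY : Y.Nonempty) : pickLE a Y ∈ Y := by
  unfold pickLE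
  split
  · next h => exact Finset.mem_of_mem_filter _ ((Y.filter (fun b => b ≤ a)).max'_mem h)
  · exact Y.max'_mem hY

lemma pickLE_eq {Y : Finset ℕ} {a : ℕ} (ha : a ∈ Y) : pickLE a Y = a := by
  have hmem : a ∈ Y.filter (fun b => b ≤ a) := Finset.mem_filter.2 ⟨ha, le_refl a⟩
  have hne : (Y.filter (fun b => b ≤ a)).Nonempty := ⟨a, hmem⟩
  unfold pickLE
  rw [dif_pos hne]
  refine le_antisymm ?_ (Finset.le_max' _ _ hmem)
  have := (Y.filter (fun b => b ≤ a)).max'_mem hne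
  exact (Finset.mem_filter.1 this).2

lemma greedy_subset : ∀ (l : List ℕ) (Y : Finset ℕ), l.length ≤ Y.card →
    ∀ y ∈ greedyList l Y, y ∈ Y := by
  intro l
  induction l with
  | nil => intro Y _ y hy; simp [greedyList] at hy
  | cons a as ih =>
    intro Y hlen y hy
    have hY : Y.Nonempty := Finset.card_pos.1 (lt_of_lt_of_le (Nat.succ_pos _) hlen)
    simp only [greedyList, List.mem_cons] at hy
    rcases hy with rfl | hy
    · exact pickLE_mem a hY
    · have hcard : as.length ≤ (Y.erase (pickLE a Y)).card := by
        rw [Finset.card_erase_of_mem (pickLE_mem a hY)]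
        simp only [List.length_cons] at hlen
        omega
      exact Finset.mem_of_mem_erase (ih _ hcard y hy)

lemma greedy_id : ∀ (l : List ℕ) (Y : Finset ℕ), l.Pairwise (· < ·) →
    (∀ a ∈ l, a ∈ Y) → greedyList l Y = l := by
  intro l
  induction l with
  | nil => intro Y _ _; rfl
  | cons a as ih =>
    intro Y hsort hmem
    have ha : a ∈ Y := hmem a List.mem_cons_self
    have hpick : pickLE a Y = a := pickLE_eq ha
    simp only [greedyList, hpick, List.cons.injEq, true_and]
    refine ih _ (List.pairwise_cons.1 hsort).2 ?_
    intro b hb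
    refine Finset.mem_erase.2 ⟨?_, hmem b (List.mem_cons_of_mem _ hb)⟩
    exact (Nat.ne_of_gt ((List.pairwise_cons.1 hsort).1 b hb))

lemma phiImage_self (X Y : Finset ℕ) (h : X ⊆ Y) : phiImage X Y = X := by
  unfold phiImage phiList
  rw [greedy_id _ _ (X.sortedLT_sort.pairwise) (fun a ha => h ((X.mem_sort _).1 ha))]
  exact X.sort_toFinset _

/-- the case `k = 1` of the main conjecture: starting from `(X,X)`,
the first application of `Ψ` gives `(X, (X+e) ∪ {0,…,e-1})`, and after the second
application the first component is contained in the second. -/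
theorem stmt_11 (e m : ℕ) (he : 1 ≤ e) (X : Finset ℕ) (hX : X.card = m) :
    Psi e X X = (X, X.image (fun x => x + e) ∪ Finset.range e) ∧
    (Psi e (Psi e X X).1 (Psi e X X).2).1 ⊆ (Psi e (Psi e X X).1 (Psi e X X).2).2 := by
  have h1 : Psi e X X = (X, X.image (fun x => x + e) ∪ Finset.range e) := by
    unfold Psi
    rw [phiImage_self X X (subset_refl X)]
    simp
  refine ⟨h1, ?_⟩
  rw [h1]
  set X2 : Finset ℕ := X.image (fun x => x + e) ∪ Finset.range e with hX2
  have hdisj : Disjoint (X.image (fun x => x + e)) (Finset.range e) := by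
    rw [Finset.disjoint_left]
    intro b hb hr
    obtain ⟨x, _, rfl⟩ := Finset.mem_image.1 hb
    have := Finset.mem_range.1 hr
    omega
  have hcard : X2.card = m + e := by
    rw [hX2, Finset.card_union_of_disjoint hdisj, Finset.card_range,
      Finset.card_image_of_injective _ (fun a b hab => by omega), hX]
  have hsub : phiImage X X2 ⊆ X2 := by
    intro y hy
    unfold phiImage phiList at hy
    refine greedy_subset _ _ ?_ y (List.mem_toFinset.1 hy)
    rw [Finset.length_sort, hX, hcard]
    omega
  intro y hy
  simp only [Psi] at hy ⊢
  have hyX2 : y ∈ X2 := hsub hy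
  rw [hX2] at hyX2
  rcases Finset.mem_union.1 hyX2 with h | h
  · exact Finset.mem_union.2 (Or.inl (Finset.mem_union.2 (Or.inl h)))
  · exact Finset.mem_union.2 (Or.inr h)
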